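/- Let V ∈ ℂ^{n×k} have orthonormal columns, P ∈ ℂ^{n×k} consist of distinct columns of the identity with V*P invertible, and Π_p = P(V*P)^{-1}V*. Then for any A ∈ ℂ^{m×n}, ‖A − A Π_p‖_F ≤ ‖I − Π_p‖₂ · ‖A (I − V V*)‖_F. -/

import Mathlib

open Matrix BigOperators

/-- Frobenius norm of a complex matrix. -/
noncomputable def frob {m n : Type*} [Fintype m] [Fintype n] (A : Matrix m n ℂ) : ℝ :=
  Real.sqrt (∑ i, ∑ j, ‖A i j‖ ^ 2)

/-- Spectral norm (largest singular value) of a complex matrix. -/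
noncomputable def spec {m n : Type*} [Fintype m] [Fintype n] [DecidableEq n]
    (A : Matrix m n ℂ) : ℝ :=
  ‖LinearMap.toContinuousLinearMap (Matrix.toEuclideanLin A)‖

/-- The column-selection matrix `I(:,p)` built from an index map `p`. -/
def colSel {n r : ℕ} (p : Fin r → Fin n) : Matrix (Fin n) (Fin r) ℂ :=
  Matrix.of fun i j => if i = p j then 1 else 0

lemma spec_nonneg {m n : ℕ} (A : Matrix (Fin m) (Fin n) ℂ) : 0 ≤ spec A :=
  norm_nonneg _

lemma frob_nonneg {m n : ℕ} (A : Matrix (Fin m) (Fin n) ℂ) : 0 ≤ frob A :=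
  Real.sqrt_nonneg _

lemma spec_conjTranspose {m n : ℕ} (A : Matrix (Fin m) (Fin n) ℂ) : spec Aᴴ = spec A := by
  unfold spec
  rw [Matrix.toEuclideanLin_conjTranspose_eq_adjoint, LinearMap.adjoint_toContinuousLinearMap]
  exact (ContinuousLinearMap.adjoint : _ ≃ₗᵢ⋆[ℂ] _).norm_map _

lemma frob_conjTranspose {m n : ℕ} (A : Matrix (Fin m) (Fin n) ℂ) : frob Aᴴ = frob A := by
  unfold frob
  rw [Finset.sum_comm]
  simp [Matrix.conjTranspose_apply]

lemma mulVec_norm_le {m n : ℕ} (B : Matrix (Fin m) (Fin n) ℂ) (x : EuclideanSpace ℂ (Fin n)) :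
    ‖Matrix.toEuclideanLin B x‖ ≤ spec B * ‖x‖ := by
  have := (LinearMap.toContinuousLinearMap (Matrix.toEuclideanLin B)).le_opNorm x
  simpa [spec] using this

lemma frob_mul_le {m n l : ℕ} (B : Matrix (Fin m) (Fin n) ℂ) (C : Matrix (Fin n) (Fin l) ℂ) :
    frob (B * C) ≤ spec B * frob C := by
  unfold frob
  rw [Finset.sum_comm]
  have key : ∀ j : Fin l, ∑ i, ‖(B * C) i j‖ ^ 2 ≤ spec B ^ 2 * ∑ i, ‖C i j‖ ^ 2 := by
    intro j
    set x : EuclideanSpace ℂ (Fin n) := (WithLp.equiv 2 _).symm (fun i => C i j) with hx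
    have h1 : ∑ i, ‖(B * C) i j‖ ^ 2 = ‖Matrix.toEuclideanLin B x‖ ^ 2 := by
      rw [EuclideanSpace.norm_eq, Real.sq_sqrt (by positivity)]
      refine Finset.sum_congr rfl fun i _ => ?_
      rfl
    have h2 : ‖x‖ ^ 2 = ∑ i, ‖C i j‖ ^ 2 := by
      rw [EuclideanSpace.norm_eq, Real.sq_sqrt (by positivity)]
      rfl
    rw [h1, ← h2]
    calc ‖Matrix.toEuclideanLin B x‖ ^ 2 ≤ (spec B * ‖x‖) ^ 2 := by
          apply pow_le_pow_left₀ (norm_nonneg _) (mulVec_norm_le B x)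
      _ = spec B ^ 2 * ‖x‖ ^ 2 := by ring
  calc Real.sqrt (∑ j, ∑ i, ‖(B * C) i j‖ ^ 2)
      ≤ Real.sqrt (spec B ^ 2 * ∑ j : Fin l, ∑ i, ‖C i j‖ ^ 2) := by
        apply Real.sqrt_le_sqrt
        rw [Finset.mul_sum]
        exact Finset.sum_le_sum fun j _ => key j
    _ = spec B * Real.sqrt (∑ j, ∑ i, ‖C i j‖ ^ 2) := by
        rw [Real.sqrt_mul (by positivity), Real.sqrt_sq (spec_nonneg B)]
    _ = spec B * Real.sqrt (∑ i, ∑ j, ‖C i j‖ ^ 2) := by rw [Finset.sum_comm]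

lemma frob_mul_le' {m n l : ℕ} (B : Matrix (Fin m) (Fin n) ℂ) (C : Matrix (Fin n) (Fin l) ℂ) :
    frob (B * C) ≤ spec C * frob B := by
  rw [← frob_conjTranspose (B * C), Matrix.conjTranspose_mul, ← frob_conjTranspose B,
    ← spec_conjTranspose C]
  exact frob_mul_le Cᴴ Bᴴ

/-- `‖A − A Π_p‖_F ≤ ‖I − Π_p‖₂ ‖A(I − VV*)‖_F` for the interpolatory projector
`Π_p = P(V*P)⁻¹V*`. -/
theorem frob_sub_interpProj_le {m n k : ℕ}
    (V : Matrix (Fin n) (Fin k) ℂ) (hV : Vᴴ * V = 1)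
    (p : Fin k → Fin n) (hp : Function.Injective p)
    (hinv : IsUnit (Vᴴ * colSel p))
    (A : Matrix (Fin m) (Fin n) ℂ) :
    frob (A - A * (colSel p * (Vᴴ * colSel p)⁻¹ * Vᴴ))
      ≤ spec (1 - colSel p * (Vᴴ * colSel p)⁻¹ * Vᴴ) * frob (A * (1 - V * Vᴴ)) := by
  set Pp := colSel p * (Vᴴ * colSel p)⁻¹ * Vᴴ with hPp
  have hdet : (Vᴴ * colSel p) * (Vᴴ * colSel p)⁻¹ = 1 :=
    Matrix.mul_nonsing_inv _ ((Matrix.isUnit_iff_isUnit_det _).mp hinv)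
  have hkey : Vᴴ * Pp = Vᴴ := by
    rw [hPp, ← Matrix.mul_assoc, ← Matrix.mul_assoc, hdet, Matrix.one_mul]
  have hfact : (1 - V * Vᴴ) * (1 - Pp) = 1 - Pp := by
    rw [Matrix.sub_mul, Matrix.one_mul, Matrix.mul_assoc V Vᴴ, Matrix.mul_sub, Matrix.mul_one,
      hkey, sub_self, Matrix.mul_zero, sub_zero]
  have h1 : A - A * Pp = A * (1 - V * Vᴴ) * (1 - Pp) := by
    rw [Matrix.mul_assoc, hfact, Matrix.mul_sub, Matrix.mul_one]
  rw [h1]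
  exact frob_mul_le' _ _
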